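/- Let N_H, f ∈ ℕ with N_H ≥ 1 and f ≥ 1, let h ≥ 1, and let 0 ≤ e ≤ f. The number of h-tuples (F_1, …, F_h) of N_H × f column-regular binary matrices for which the set of initially extractable columns has cardinality exactly e equals Θ(N_H, f, h, e) := C(f, e) · Σ_{b = (b_1,…,b_h), 0 ≤ b_i ≤ e} Ψ(e, b) · ∏_{i=1}^{h} [ C(N_H, b_i) · b_i! · z(N_H − b_i, f − b_i) ]. -/

import Mathlib

/-- The weight of row `i` of a binary matrix `F`: the number of nonzero entries in row `i`. -/
def rowWeight {m n : ℕ} (F : Matrix (Fin m) (Fin n) Bool) (i : Fin m) : ℕ :=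
  (Finset.univ.filter (fun j => F i j = true)).card

/-- The weight of column `j` of a binary matrix `F`: the number of nonzero entries in column `j`. -/
def colWeight {m n : ℕ} (F : Matrix (Fin m) (Fin n) Bool) (j : Fin n) : ℕ :=
  (Finset.univ.filter (fun i => F i j = true)).card

/-- A binary matrix is column-regular if every column contains exactly one nonzero entry. -/
def ColRegular {m n : ℕ} (F : Matrix (Fin m) (Fin n) Bool) : Prop :=
  ∀ j, colWeight F j = 1

/-- A stopping matrix: a column-regular binary matrix with no row of weight one. -/
def IsStopping {m n : ℕ} (F : Matrix (Fin m) (Fin n) Bool) : Prop :=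
  ColRegular F ∧ ∀ i, rowWeight F i ≠ 1

instance {m n : ℕ} (F : Matrix (Fin m) (Fin n) Bool) : Decidable (ColRegular F) :=
  inferInstanceAs (Decidable (∀ j, colWeight F j = 1))

instance {m n : ℕ} (F : Matrix (Fin m) (Fin n) Bool) : Decidable (IsStopping F) :=
  inferInstanceAs (Decidable (ColRegular F ∧ ∀ i, rowWeight F i ≠ 1))

/-- `z m n` is the number of `m × n` stopping matrices. -/
def z (m n : ℕ) : ℕ :=
  Fintype.card {F : Matrix (Fin m) (Fin n) Bool // IsStopping F}

/-- `Psi h e b` is the number of `h`-tuples `(C 1, …, C h)` of subsets of a fixed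
`e`-element set with `|C i| = b i` for every `i` and whose union is the whole set. -/
def Psi (h e : ℕ) (b : Fin h → ℕ) : ℕ :=
  Fintype.card {C : Fin h → Finset (Fin e) //
    (∀ i, (C i).card = b i) ∧ Finset.univ.biUnion C = Finset.univ}

/-- In a column-regular matrix, column `j` is pivotal if the (unique) row containing the
nonzero entry of column `j` has weight one. -/
def Pivotal {m n : ℕ} (F : Matrix (Fin m) (Fin n) Bool) (j : Fin n) : Prop :=
  ∃ i, F i j = true ∧ rowWeight F i = 1

instance {m n : ℕ} (F : Matrix (Fin m) (Fin n) Bool) (j : Fin n) : Decidable (Pivotal F j) :=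
  inferInstanceAs (Decidable (∃ i, F i j = true ∧ rowWeight F i = 1))

/-- Given an `h`-tuple of matrices, column `j` is initially extractable if it is pivotal
in at least one matrix of the tuple. -/
def Extractable {m n h : ℕ} (G : Fin h → Matrix (Fin m) (Fin n) Bool) (j : Fin n) : Prop :=
  ∃ i, Pivotal (G i) j

instance {m n h : ℕ} (G : Fin h → Matrix (Fin m) (Fin n) Bool) (j : Fin n) :
    Decidable (Extractable G j) :=
  inferInstanceAs (Decidable (∃ i, Pivotal (G i) j))

/-- The count `Θ(N_H, f, h, e)` from Lemma 2. -/
def Theta (NH f h e : ℕ) : ℕ :=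
  f.choose e * ∑ b ∈ Fintype.piFinset (fun _ : Fin h => Finset.range (e + 1)),
    Psi h e b * ∏ i, (NH.choose (b i) * (b i).factorial * z (NH - b i) (f - b i))


open Finset

section FunSide
set_option linter.unusedSectionVars false
variable {J R : Type*} [Fintype J] [DecidableEq J] [Fintype R] [DecidableEq R]

def SingAt (g : J → R) (j : J) : Prop := ∀ j', g j' = g j → j' = j
instance (g : J → R) (j : J) : Decidable (SingAt g j) :=
  inferInstanceAs (Decidable (∀ j', g j' = g j → j' = j))
def NoSing (g : J → R) : Prop := ∀ j, ¬ SingAt g j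
instance (g : J → R) : Decidable (NoSing g) := inferInstanceAs (Decidable (∀ j, ¬ SingAt g j))
def singSet (g : J → R) : Finset J := Finset.univ.filter (fun j => SingAt g j)

lemma singSet_eq_iff (g : J → R) (C : Finset J) :
    singSet g = C ↔
      (Set.InjOn g ↑C ∧ (∀ j ∉ C, ∀ c ∈ C, g j ≠ g c) ∧ (∀ j ∉ C, ∃ j', j' ≠ j ∧ g j' = g j)) := by
  have hmem : ∀ j, (j ∈ singSet g ↔ SingAt g j) := by intro j; simp [singSet]
  constructor
  · intro h
    refine ⟨?_, ?_, ?_⟩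
    · intro x hx y hy hxy
      have hy' : SingAt g y := (hmem y).1 (h ▸ hy)
      exact hy' x hxy
    · intro j hj c hc hgc
      have hc' : SingAt g c := (hmem c).1 (h ▸ hc)
      exact hj (hc' j hgc ▸ hc)
    · intro j hj
      have : ¬ SingAt g j := fun hs => hj (h ▸ (hmem j).2 hs)
      simpa [SingAt, and_comm] using this
  · rintro ⟨h1, h2, h3⟩
    ext j
    rw [hmem]
    constructor
    · intro hs
      by_contra hj
      obtain ⟨j', hj'ne, hj'eq⟩ := h3 j hj
      exact hj'ne (hs j' hj'eq)
    · intro hj x hx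
      by_cases hxC : x ∈ C
      · exact h1 hxC hj hx
      · exact absurd hx (h2 x hxC j hj)

lemma singAt_comp {J' R' : Type*} [Fintype J'] [DecidableEq J'] [Fintype R'] [DecidableEq R']
    (eJ : J ≃ J') (eR : R ≃ R') (g : J → R) (j' : J') :
    SingAt (fun x => eR (g (eJ.symm x))) j' ↔ SingAt g (eJ.symm j') := by
  constructor
  · intro hs x hx
    have := hs (eJ x) (by simpa using hx)
    simpa using congrArg eJ.symm this
  · intro hs x hx
    have := hs (eJ.symm x) (by simpa using hx)
    simpa using congrArg eJ this

lemma noSing_comp {J' R' : Type*} [Fintype J'] [DecidableEq J'] [Fintype R'] [DecidableEq R']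
    (eJ : J ≃ J') (eR : R ≃ R') (g : J → R) :
    NoSing (fun x => eR (g (eJ.symm x))) ↔ NoSing g := by
  constructor
  · intro hs j hj
    exact hs (eJ j) (by rw [singAt_comp]; simpa using hj)
  · intro hs j' hj'
    exact hs (eJ.symm j') ((singAt_comp eJ eR g j').1 hj')

lemma card_noSing_congr {J' R' : Type*} [Fintype J'] [DecidableEq J'] [Fintype R'] [DecidableEq R']
    (eJ : J ≃ J') (eR : R ≃ R') :
    Fintype.card {g : J → R // NoSing g} = Fintype.card {g : J' → R' // NoSing g} :=
  Fintype.card_congr ((Equiv.arrowCongr eJ eR).subtypeEquiv (fun g => (noSing_comp eJ eR g).symm))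

/-- the number of functions `Fin n → Fin m` with no singleton fibers -/
def wcard (m n : ℕ) : ℕ := Fintype.card {g : Fin n → Fin m // NoSing g}

lemma card_noSing_eq_wcard :
    Fintype.card {g : J → R // NoSing g} = wcard (Fintype.card R) (Fintype.card J) :=
  card_noSing_congr (Fintype.equivFin J) (Fintype.equivFin R)

lemma fiber_count (C : Finset J) (φ : {x : J // x ∈ C} → R) (hφ : Function.Injective φ) :
    Fintype.card {g : J → R // singSet g = C ∧ (fun x : {x : J // x ∈ C} => g x.1) = φ}
      = wcard (Fintype.card R - C.card) (Fintype.card J - C.card) := by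
  have himg : (Finset.univ.image φ).card = C.card := by
    rw [Finset.card_image_of_injective _ hφ, Finset.card_univ, Fintype.card_coe]
  set R2 := {r : R // r ∉ Finset.univ.image φ} with hR2
  set D2 := {j : J // j ∉ C} with hD2
  have key : Fintype.card {g : J → R // singSet g = C ∧ (fun x : {x : J // x ∈ C} => g x.1) = φ}
      = Fintype.card {ψ : D2 → R2 // NoSing ψ} := by
    apply Fintype.card_congr
    refine ⟨fun gp => ⟨fun y => ⟨gp.1 y.1, ?_⟩, ?_⟩,
            fun ψp => ⟨fun j => if h : j ∈ C then φ ⟨j, h⟩ else (ψp.1 ⟨j, h⟩).1, ?_, ?_⟩,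
            ?_, ?_⟩
    · obtain ⟨h1, h2, h3⟩ := (singSet_eq_iff gp.1 C).1 gp.2.1
      simp only [Finset.mem_image, Finset.mem_univ, true_and]
      rintro ⟨x, hx⟩
      have hthis : φ x = gp.1 x.1 := (congrFun gp.2.2 x).symm
      exact h2 y.1 y.2 x.1 x.2 (hx.symm.trans hthis)
    · obtain ⟨h1, h2, h3⟩ := (singSet_eq_iff gp.1 C).1 gp.2.1
      intro y hy
      obtain ⟨j', hj'ne, hj'eq⟩ := h3 y.1 y.2
      have hj'C : j' ∉ C := by
        intro hc
        exact h2 y.1 y.2 j' hc hj'eq.symm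
      have := hy ⟨j', hj'C⟩ (Subtype.ext hj'eq)
      exact hj'ne (congrArg Subtype.val this)
    · rw [singSet_eq_iff]
      refine ⟨?_, ?_, ?_⟩
      · intro x hx y hy hxy
        simp only [Finset.mem_coe] at hx hy
        simp only [dif_pos hx, dif_pos hy] at hxy
        exact congrArg Subtype.val (hφ hxy)
      · intro j hj c hc
        rw [dif_neg hj, dif_pos hc]
        have := (ψp.1 ⟨j, hj⟩).2
        simp only [Finset.mem_image, Finset.mem_univ, true_and] at this
        exact fun hh => this ⟨⟨c, hc⟩, hh.symm⟩
      · intro j hj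
        have := ψp.2 ⟨j, hj⟩
        simp only [SingAt, not_forall] at this
        obtain ⟨y', hy'eq, hy'ne⟩ := this
        refine ⟨y'.1, fun hh => hy'ne (Subtype.ext hh), ?_⟩
        rw [dif_neg y'.2, dif_neg hj]
        exact congrArg Subtype.val hy'eq
    · funext x
      exact dif_pos x.2
    · intro gp
      apply Subtype.ext
      funext j
      by_cases hj : j ∈ C
      · simp only [dif_pos hj]
        exact (congrFun gp.2.2 ⟨j, hj⟩).symm
      · simp only [dif_neg hj]
    · intro ψp
      apply Subtype.ext
      funext y
      apply Subtype.ext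
      simp only [dif_neg y.2]
      rfl
  rw [key, card_noSing_eq_wcard]
  congr 1
  · show Fintype.card {r : R // r ∉ Finset.univ.image φ} = _
    rw [Fintype.card_subtype, Finset.filter_not, Finset.card_sdiff_of_subset (Finset.filter_subset _ _)]
    have h2 : Finset.univ.filter (fun r => r ∈ Finset.univ.image φ) = Finset.univ.image φ := by
      ext r; simp
    rw [h2, himg, Finset.card_univ]
  · show Fintype.card {j : J // j ∉ C} = _
    rw [Fintype.card_subtype, Finset.filter_not, Finset.card_sdiff_of_subset (Finset.filter_subset _ _)]
    have h2 : Finset.univ.filter (fun j => j ∈ C) = C := by ext j; simp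
    rw [h2, Finset.card_univ]

lemma card_singSet (C : Finset J) :
    Fintype.card {g : J → R // singSet g = C}
      = (Fintype.card R).choose C.card * (C.card).factorial
          * wcard (Fintype.card R - C.card) (Fintype.card J - C.card) := by
  classical
  have hmaps : ∀ g ∈ Finset.univ.filter (fun g : J → R => singSet g = C),
      (fun x : {x : J // x ∈ C} => g x.1) ∈
        Finset.univ.filter (fun φ : {x : J // x ∈ C} → R => Function.Injective φ) := by
    intro g hg
    simp only [Finset.mem_filter, Finset.mem_univ, true_and] at hg ⊢
    obtain ⟨h1, _, _⟩ := (singSet_eq_iff g C).1 hg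
    intro x y hxy
    exact Subtype.ext (h1 x.2 y.2 hxy)
  have hfib : ∀ φ ∈ (Finset.univ.filter (fun φ : {x : J // x ∈ C} → R => Function.Injective φ)),
      ((Finset.univ.filter (fun g : J → R => singSet g = C)).filter
        (fun g => (fun x : {x : J // x ∈ C} => g x.1) = φ)).card
      = wcard (Fintype.card R - C.card) (Fintype.card J - C.card) := by
    intro φ hφ
    rw [Finset.filter_filter, ← Fintype.card_subtype]
    exact fiber_count C φ (by simpa using hφ)
  rw [Fintype.card_subtype,
    Finset.card_eq_sum_card_fiberwise hmaps,
    Finset.sum_congr rfl hfib, Finset.sum_const, smul_eq_mul]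
  congr 1
  rw [← Fintype.card_subtype]
  have h3 : Fintype.card {φ : {x : J // x ∈ C} → R // Function.Injective φ}
      = Fintype.card ({x : J // x ∈ C} ↪ R) :=
    Fintype.card_congr (Equiv.subtypeInjectiveEquivEmbedding _ _)
  rw [h3, Fintype.card_embedding_eq, Fintype.card_coe,
    Nat.descFactorial_eq_factorial_mul_choose, Nat.mul_comm]
lemma fiber_card_eq_one_iff (g : J → R) (j : J) :
    (Finset.univ.filter (fun j' => g j' = g j)).card = 1 ↔ SingAt g j := by
  constructor
  · intro h j' hj'
    rw [Finset.card_eq_one] at h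
    obtain ⟨a, ha⟩ := h
    have h1 : j' ∈ Finset.univ.filter (fun x => g x = g j) := by simp [hj']
    have h2 : j ∈ Finset.univ.filter (fun x => g x = g j) := by simp
    rw [ha] at h1 h2
    simp at h1 h2; rw [h1, h2]
  · intro h
    rw [Finset.card_eq_one]
    exact ⟨j, by ext x; simp; exact ⟨fun hx => h x hx, fun hx => by rw [hx]⟩⟩

end FunSide


section Bridge
variable {m n : ℕ}

def toMat (g : Fin n → Fin m) : Matrix (Fin m) (Fin n) Bool := fun i j => decide (g j = i)

lemma toMat_colreg (g : Fin n → Fin m) : ColRegular (toMat g) := by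
  intro j
  unfold colWeight toMat
  rw [Finset.card_eq_one]
  exact ⟨g j, by ext i; simp [eq_comm]⟩

lemma rowWeight_toMat (g : Fin n → Fin m) (i : Fin m) :
    rowWeight (toMat g) i = (Finset.univ.filter (fun j => g j = i)).card := by
  unfold rowWeight toMat; congr 1; ext j; simp

lemma pivotal_toMat (g : Fin n → Fin m) (j : Fin n) :
    Pivotal (toMat g) j ↔ SingAt g j := by
  constructor
  · rintro ⟨i, hij, hrw⟩
    have : g j = i := by simpa [toMat] using hij
    subst this
    rw [rowWeight_toMat] at hrw
    exact (fiber_card_eq_one_iff g j).1 hrw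
  · intro hs
    exact ⟨g j, by simp [toMat], by rw [rowWeight_toMat]; exact (fiber_card_eq_one_iff g j).2 hs⟩

lemma stopping_toMat (g : Fin n → Fin m) :
    IsStopping (toMat g) ↔ NoSing g := by
  constructor
  · rintro ⟨_, hrow⟩ j hs
    exact hrow (g j) (by rw [rowWeight_toMat]; exact (fiber_card_eq_one_iff g j).2 hs)
  · intro hns
    refine ⟨toMat_colreg g, fun i hi => ?_⟩
    rw [rowWeight_toMat] at hi
    rw [Finset.card_eq_one] at hi
    obtain ⟨a, ha⟩ := hi
    have hga : g a = i := by
      have : a ∈ Finset.univ.filter (fun j => g j = i) := ha ▸ Finset.mem_singleton_self a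
      simpa using this
    refine hns a (fun j' hj' => ?_)
    have : j' ∈ Finset.univ.filter (fun j => g j = i) := by simp [hj', hga]
    rw [ha] at this; simpa using this

lemma toMat_injective : Function.Injective (toMat (n := n) (m := m)) := by
  intro g g' hgg
  funext j
  have := congrFun (congrFun hgg (g j)) j
  simp [toMat] at this
  exact this.symm

lemma toMat_surj_on_colreg (F : Matrix (Fin m) (Fin n) Bool) (hF : ColRegular F) :
    ∃ g, toMat g = F := by
  have hex : ∀ j, ∃! i, F i j = true := by
    intro j
    have := hF j
    rw [colWeight, Finset.card_eq_one] at this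
    obtain ⟨a, ha⟩ := this
    have hmem : ∀ i, F i j = true ↔ i = a := by
      intro i
      constructor
      · intro hi
        have : i ∈ Finset.univ.filter (fun i => F i j = true) := by simp [hi]
        rw [ha] at this; simpa using this
      · intro hi
        rw [hi]
        have : a ∈ Finset.univ.filter (fun i => F i j = true) := ha ▸ Finset.mem_singleton_self a
        simpa using this
    exact ⟨a, (hmem a).2 rfl, fun i hi => (hmem i).1 hi⟩
  choose g hg hguniq using hex
  refine ⟨g, ?_⟩
  funext i j
  by_cases hij : F i j = true
  · have : g j = i := (hguniq j i hij).symm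
    simp [toMat, this, hij]
  · have hgi : g j ≠ i := fun hgi => hij (hgi ▸ hg j)
    have hFf : F i j = false := by simpa using hij
    simp [toMat, hgi, hFf]

/-- the key equivalence -/
noncomputable def colRegEquiv : (Fin n → Fin m) ≃ {F : Matrix (Fin m) (Fin n) Bool // ColRegular F} :=
  Equiv.ofBijective (fun g => ⟨toMat g, toMat_colreg g⟩)
    ⟨fun g g' h => toMat_injective (congrArg Subtype.val h),
     fun F => (toMat_surj_on_colreg F.1 F.2).imp (fun g hg => Subtype.ext hg)⟩

lemma z_eq_card_noSing (m n : ℕ) :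
    z m n = Fintype.card {g : Fin n → Fin m // NoSing g} := by
  rw [z]
  apply Fintype.card_congr
  apply Equiv.symm
  exact Equiv.ofBijective (fun g => ⟨toMat g.1, (stopping_toMat g.1).2 g.2⟩)
    ⟨fun g g' h => Subtype.ext (toMat_injective (congrArg Subtype.val h)),
     fun F => by
      obtain ⟨g, hg⟩ := toMat_surj_on_colreg F.1 F.2.1
      exact ⟨⟨g, (stopping_toMat g).1 (hg ▸ F.2)⟩, Subtype.ext hg⟩⟩
end Bridge


lemma biUnion_map_eq {α β ι : Type*} [DecidableEq α] [DecidableEq β] [Fintype ι]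
    (C : ι → Finset α) (σ : α ↪ β) :
    Finset.univ.biUnion (fun i => (C i).map σ) = (Finset.univ.biUnion C).map σ := by
  ext x
  simp only [Finset.mem_biUnion, Finset.mem_map, Finset.mem_univ, true_and]
  exact ⟨fun ⟨i, a, ha, he⟩ => ⟨a, ⟨i, ha⟩, he⟩, fun ⟨a, ⟨i, ha⟩, he⟩ => ⟨i, a, ha, he⟩⟩

lemma card_cover_congr {α β : Type*} [Fintype α] [DecidableEq α] [Fintype β] [DecidableEq β]
    {h : ℕ} (σ : α ≃ β) (b : Fin h → ℕ) :
    Fintype.card {C : Fin h → Finset α //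
        (∀ i, (C i).card = b i) ∧ Finset.univ.biUnion C = Finset.univ}
      = Fintype.card {C : Fin h → Finset β //
        (∀ i, (C i).card = b i) ∧ Finset.univ.biUnion C = Finset.univ} := by
  apply Fintype.card_congr
  refine ⟨fun C => ⟨fun i => (C.1 i).map σ.toEmbedding, ?_, ?_⟩,
          fun D => ⟨fun i => (D.1 i).map σ.symm.toEmbedding, ?_, ?_⟩, ?_, ?_⟩
  · intro i; rw [Finset.card_map]; exact C.2.1 i
  · rw [biUnion_map_eq, C.2.2, Finset.univ_map_equiv_to_embedding]
  · intro i; rw [Finset.card_map]; exact D.2.1 i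
  · rw [biUnion_map_eq, D.2.2, Finset.univ_map_equiv_to_embedding]
  · intro C
    apply Subtype.ext
    funext i
    ext a
    simp
  · intro D
    apply Subtype.ext
    funext i
    ext a
    simp

lemma card_cover_eq_psi {J : Type*} [Fintype J] [DecidableEq J] {h : ℕ}
    (E : Finset J) (b : Fin h → ℕ) :
    Fintype.card {C : Fin h → Finset J //
        Finset.univ.biUnion C = E ∧ ∀ i, (C i).card = b i}
      = Psi h E.card b := by
  rw [Psi, ← card_cover_congr E.equivFin b]
  apply Fintype.card_congr
  refine ⟨fun C => ⟨fun i => (C.1 i).subtype (· ∈ E), ?_, ?_⟩,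
          fun D => ⟨fun i => (D.1 i).map (Function.Embedding.subtype _), ?_, ?_⟩, ?_, ?_⟩
  · intro i
    have hsub : C.1 i ⊆ E := by
      have := Finset.subset_biUnion_of_mem C.1 (Finset.mem_univ i)
      rwa [C.2.1] at this
    rw [← Finset.card_map (Function.Embedding.subtype (· ∈ E)), Finset.subtype_map,
      Finset.filter_true_of_mem hsub]
    exact C.2.2 i
  · ext x
    simp only [Finset.mem_biUnion, Finset.mem_univ, true_and, Finset.mem_subtype]
    have hx : (x : J) ∈ Finset.univ.biUnion C.1 := by rw [C.2.1]; exact x.2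
    simpa using hx
  · rw [biUnion_map_eq, D.2.2]
    ext x
    simp only [Finset.mem_map, Finset.mem_univ, true_and, Function.Embedding.coe_subtype]
    exact ⟨fun ⟨a, ha⟩ => ha ▸ a.2, fun hx => ⟨⟨x, hx⟩, rfl⟩⟩
  · intro i; rw [Finset.card_map]; exact D.2.1 i
  · intro C
    apply Subtype.ext
    funext i
    have hsub : C.1 i ⊆ E := by
      have := Finset.subset_biUnion_of_mem C.1 (Finset.mem_univ i)
      rwa [C.2.1] at this
    show ((C.1 i).subtype (· ∈ E)).map (Function.Embedding.subtype _) = C.1 i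
    rw [Finset.subtype_map, Finset.filter_true_of_mem hsub]
  · intro D
    apply Subtype.ext
    funext i
    ext a
    simp [Finset.mem_subtype, Finset.mem_map]



lemma wcard_eq_z (m n : ℕ) : wcard m n = z m n := (z_eq_card_noSing m n).symm

section Tuples
set_option linter.unusedSectionVars false
variable {J R : Type*} [Fintype J] [DecidableEq J] [Fintype R] [DecidableEq R]

lemma filter_exists_eq_biUnion {h : ℕ} (g : Fin h → (J → R)) :
    Finset.univ.filter (fun j => ∃ i, SingAt (g i) j)
      = Finset.univ.biUnion (fun i => singSet (g i)) := by
  ext j; simp [singSet]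

/-- the number of `g : J → R` whose singleton set is a fixed set of size `b` -/
def mc (rc jc b : ℕ) : ℕ := rc.choose b * b.factorial * wcard (rc - b) (jc - b)

lemma card_tuples_fixed {h : ℕ} (E : Finset J) :
    Fintype.card {g : Fin h → (J → R) // Finset.univ.biUnion (fun i => singSet (g i)) = E}
      = ∑ b ∈ Fintype.piFinset (fun _ : Fin h => Finset.range (E.card + 1)),
          Psi h E.card b * ∏ i, mc (Fintype.card R) (Fintype.card J) (b i) := by
  classical
  rw [Fintype.card_subtype]
  rw [Finset.card_eq_sum_card_fiberwise (f := fun g : Fin h → (J → R) => fun i => singSet (g i))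
      (t := Finset.univ.filter (fun C : Fin h → Finset J => Finset.univ.biUnion C = E)) ?hmaps]
  case hmaps =>
    intro g hg
    simp only [Finset.mem_coe, Finset.mem_filter, Finset.mem_univ, true_and] at hg ⊢
    exact hg
  have hfib : ∀ C ∈ Finset.univ.filter (fun C : Fin h → Finset J => Finset.univ.biUnion C = E),
      ((Finset.univ.filter (fun g : Fin h → (J → R) =>
          Finset.univ.biUnion (fun i => singSet (g i)) = E)).filter
        (fun g => (fun i => singSet (g i)) = C)).card
      = ∏ i, mc (Fintype.card R) (Fintype.card J) ((C i).card) := by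
    intro C hC
    simp only [Finset.mem_filter, Finset.mem_univ, true_and] at hC
    rw [Finset.filter_filter]
    have hpred : ∀ g ∈ (Finset.univ : Finset (Fin h → (J → R))),
        ((Finset.univ.biUnion (fun i => singSet (g i)) = E ∧ (fun i => singSet (g i)) = C)
          ↔ ∀ i, singSet (g i) = C i) := by
      intro g _
      constructor
      · rintro ⟨_, h2⟩ i; exact congrFun h2 i
      · intro hi
        have heq : (fun i => singSet (g i)) = C := funext hi
        exact ⟨heq ▸ hC, heq⟩
    rw [Finset.filter_congr hpred, ← Fintype.card_subtype]
    rw [Fintype.card_congr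
      (Equiv.subtypePiEquivPi (p := fun (i : Fin h) (x : J → R) => singSet x = C i))]
    rw [Fintype.card_pi]
    exact Finset.prod_congr rfl (fun i _ => card_singSet (C i))
  rw [Finset.sum_congr rfl hfib]
  rw [← Finset.sum_fiberwise_of_maps_to (g := fun C : Fin h → Finset J => fun i => (C i).card)
      (t := Fintype.piFinset (fun _ : Fin h => Finset.range (E.card + 1))) ?hmaps2
      (f := fun C => ∏ i, mc (Fintype.card R) (Fintype.card J) ((C i).card))]
  case hmaps2 =>
    intro C hC
    simp only [Finset.mem_filter, Finset.mem_univ, true_and] at hC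
    rw [Fintype.mem_piFinset]
    intro i
    rw [Finset.mem_range, Nat.lt_succ_iff]
    have hsub : C i ⊆ E := by
      have := Finset.subset_biUnion_of_mem C (Finset.mem_univ i)
      rwa [hC] at this
    exact Finset.card_le_card hsub
  refine Finset.sum_congr rfl (fun b hb => ?_)
  have hconst : ∀ C ∈ (Finset.univ.filter
        (fun C : Fin h → Finset J => Finset.univ.biUnion C = E)).filter
        (fun C => (fun i => (C i).card) = b),
      ∏ i, mc (Fintype.card R) (Fintype.card J) ((C i).card)
        = ∏ i, mc (Fintype.card R) (Fintype.card J) (b i) := by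
    intro C hC
    simp only [Finset.mem_filter, Finset.mem_univ, true_and] at hC
    exact Finset.prod_congr rfl (fun i _ => by rw [congrFun hC.2 i])
  rw [Finset.sum_congr rfl hconst, Finset.sum_const, smul_eq_mul]
  congr 1
  rw [Finset.filter_filter, ← Fintype.card_subtype, ← card_cover_eq_psi E b]
  apply Fintype.card_congr
  apply Equiv.subtypeEquivRight
  intro C
  constructor
  · rintro ⟨h1, h2⟩; exact ⟨h1, fun i => congrFun h2 i⟩
  · rintro ⟨h1, h2⟩; exact ⟨h1, funext h2⟩

lemma card_tuples_fun {h : ℕ} (e : ℕ) :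
    Fintype.card {g : Fin h → (J → R) //
        (Finset.univ.filter (fun j => ∃ i, SingAt (g i) j)).card = e}
      = (Fintype.card J).choose e *
          ∑ b ∈ Fintype.piFinset (fun _ : Fin h => Finset.range (e + 1)),
            Psi h e b * ∏ i, mc (Fintype.card R) (Fintype.card J) (b i) := by
  classical
  rw [Fintype.card_subtype]
  rw [Finset.card_eq_sum_card_fiberwise
      (f := fun g : Fin h → (J → R) => Finset.univ.filter (fun j => ∃ i, SingAt (g i) j))
      (t := Finset.powersetCard e Finset.univ) ?hm]
  case hm =>
    intro g hg
    rw [Finset.mem_coe, Finset.mem_powersetCard_univ]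
    simpa using hg
  have hterm : ∀ E ∈ Finset.powersetCard e (Finset.univ : Finset J),
      ((Finset.univ.filter (fun g : Fin h → (J → R) =>
          (Finset.univ.filter (fun j => ∃ i, SingAt (g i) j)).card = e)).filter
        (fun g => Finset.univ.filter (fun j => ∃ i, SingAt (g i) j) = E)).card
      = ∑ b ∈ Fintype.piFinset (fun _ : Fin h => Finset.range (e + 1)),
          Psi h e b * ∏ i, mc (Fintype.card R) (Fintype.card J) (b i) := by
    intro E hE
    rw [Finset.mem_powersetCard_univ] at hE
    rw [Finset.filter_filter]
    have hpred : ∀ g ∈ (Finset.univ : Finset (Fin h → (J → R))),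
        (((Finset.univ.filter (fun j => ∃ i, SingAt (g i) j)).card = e
            ∧ Finset.univ.filter (fun j => ∃ i, SingAt (g i) j) = E)
          ↔ Finset.univ.biUnion (fun i => singSet (g i)) = E) := by
      intro g _
      constructor
      · rintro ⟨_, h2⟩
        rw [← filter_exists_eq_biUnion]
        exact h2
      · intro hbi
        have h2 : Finset.univ.filter (fun j => ∃ i, SingAt (g i) j) = E := by
          rw [filter_exists_eq_biUnion]; exact hbi
        exact ⟨by rw [h2, hE], h2⟩
    rw [Finset.filter_congr hpred, ← Fintype.card_subtype, card_tuples_fixed E, hE]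
  rw [Finset.sum_congr rfl hterm, Finset.sum_const, smul_eq_mul,
    Finset.card_powersetCard, Finset.card_univ]
end Tuples

/-- For `N_H ≥ 1`, `f ≥ 1`, `h ≥ 1` and `0 ≤ e ≤ f`, the number of
`h`-tuples `(F_1, …, F_h)` of `N_H × f` column-regular binary matrices whose set of
initially extractable columns has cardinality exactly `e` equals `Θ(N_H, f, h, e)`. -/
theorem count_tuples_exactly_e_extractable (NH f h e : ℕ)
    (hNH : 1 ≤ NH) (hf : 1 ≤ f) (hh : 1 ≤ h) (he : e ≤ f) :
    Fintype.card {G : Fin h → Matrix (Fin NH) (Fin f) Bool //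
        (∀ i, ColRegular (G i)) ∧
        (Finset.univ.filter (fun j => Extractable G j)).card = e} =
      Theta NH f h e := by
  classical
  have key : Fintype.card {G : Fin h → Matrix (Fin NH) (Fin f) Bool //
        (∀ i, ColRegular (G i)) ∧ (Finset.univ.filter (fun j => Extractable G j)).card = e}
      = Fintype.card {g : Fin h → (Fin f → Fin NH) //
          (Finset.univ.filter (fun j => ∃ i, SingAt (g i) j)).card = e} := by
    apply Fintype.card_congr
    apply Equiv.symm
    refine Equiv.ofBijective
      (fun gp => ⟨fun i => toMat (gp.1 i), fun i => toMat_colreg _, ?_⟩) ⟨?_, ?_⟩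
    · have heq : Finset.univ.filter (fun j => Extractable (fun i => toMat (gp.1 i)) j)
          = Finset.univ.filter (fun j => ∃ i, SingAt (gp.1 i) j) := by
        apply Finset.filter_congr
        intro j _
        simp only [Extractable, pivotal_toMat]
      rw [heq]
      exact gp.2
    · intro gp gp' hfg
      apply Subtype.ext
      funext i
      apply toMat_injective
      exact congrFun (congrArg Subtype.val hfg) i
    · rintro ⟨G, hcol, hcard⟩
      choose g hg using fun i => toMat_surj_on_colreg (G i) (hcol i)
      refine ⟨⟨g, ?_⟩, ?_⟩
      · have hGg : (fun i => toMat (g i)) = G := funext hg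
        have heq : Finset.univ.filter (fun j => ∃ i, SingAt (g i) j)
            = Finset.univ.filter (fun j => Extractable G j) := by
          apply Finset.filter_congr
          intro j _
          rw [← hGg]
          simp only [Extractable, pivotal_toMat]
        rw [heq]
        exact hcard
      · apply Subtype.ext
        funext i
        exact hg i
  rw [key, card_tuples_fun e]
  simp only [Fintype.card_fin, mc, wcard_eq_z, Theta]
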